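/- Let W ∈ ℝ^N, n ≥ 1, and k₀, …, k_{n−1} ∈ ℕ with k₀ + ⋯ + k_{n−1} ≤ N. Suppose Q ∈ ℝ^N has, for each t = 0, …, n−1, exactly k_t entries equal to +2^{−t} or −2^{−t}, and all remaining entries equal to 0. Then |⟨Q, W⟩| ≤ Σ_{t=0}^{n−1} 2^{−t} ‖W_{[k_t]}‖₁. -/

import Mathlib

/-- `groupAbsSum W σ a b` is the ℓ¹ norm of the part of `W` whose magnitude-ranks
(with respect to the sorting permutation `σ`) lie in `[a, b)`; when `σ` sorts the
entries of `W` in decreasing order of magnitude, `groupAbsSum W σ (P t) (P t + k t)`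
equals `‖W_{[k_t]}‖₁` where `P t = k 0 + ⋯ + k (t-1)`. -/
noncomputable def groupAbsSum {N : ℕ} (W : Fin N → ℝ) (σ : Equiv.Perm (Fin N))
    (a b : ℕ) : ℝ :=
  ∑ r ∈ Finset.univ.filter (fun r : Fin N => a ≤ (r : ℕ) ∧ (r : ℕ) < b), |W (σ r)|

/-- `prefSum k t = k 0 + k 1 + ⋯ + k (t − 1)`. -/
def prefSum (k : ℕ → ℕ) (t : ℕ) : ℕ := ∑ j ∈ Finset.range t, k j


open Finset

-- sorted-sum lemma
lemma aux_sorted {N m : ℕ} (g : Fin N → ℝ)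
    (hg : ∀ i j : Fin N, i ≤ j → g j ≤ g i)
    (B : Finset (Fin N)) (hB : B.card = m) :
    ∑ r ∈ B, g r ≤ ∑ r ∈ univ.filter (fun r : Fin N => (r : ℕ) < m), g r := by
  have hmN : m ≤ N := by
    rw [← hB]
    simpa using Finset.card_le_univ B
  set e := B.orderEmbOfFin hB with he
  have hval : ∀ j : Fin m, (j : ℕ) ≤ (e j : ℕ) := by
    have key : ∀ a : ℕ, ∀ h : a < m, a ≤ (e ⟨a, h⟩ : ℕ) := by
      intro a
      induction a with
      | zero => intro h; exact Nat.zero_le _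
      | succ p ih =>
        intro h
        have hp : p < m := Nat.lt_of_succ_lt h
        have h1 : e ⟨p, hp⟩ < e ⟨p + 1, h⟩ := by
          apply (B.orderEmbOfFin hB).strictMono
          exact Fin.mk_lt_mk.2 (Nat.lt_succ_self p)
        have := ih hp
        have h2 : (e ⟨p, hp⟩ : ℕ) < (e ⟨p+1, h⟩ : ℕ) := h1
        omega
    intro j
    have := key j.1 j.2
    simpa using this
  have hBim : B = Finset.univ.image e := by
    ext x
    simp only [Finset.mem_image, Finset.mem_univ, true_and]
    constructor
    · intro hx
      have : x ∈ Set.range e := by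
        rw [Finset.range_orderEmbOfFin]; exact hx
      exact this
    · rintro ⟨j, rfl⟩
      exact Finset.orderEmbOfFin_mem B hB j
  have hinj : Function.Injective e := (B.orderEmbOfFin hB).injective
  have h1 : ∑ r ∈ B, g r = ∑ j : Fin m, g (e j) := by
    rw [hBim, Finset.sum_image (fun a _ b _ hab => hinj hab)]
  have hfilt : univ.filter (fun r : Fin N => (r : ℕ) < m)
      = Finset.univ.image (Fin.castLE hmN) := by
    ext r
    simp only [Finset.mem_filter, Finset.mem_univ, true_and, Finset.mem_image]
    constructor
    · intro hr; exact ⟨⟨r, hr⟩, rfl⟩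
    · rintro ⟨j, rfl⟩; exact j.2
  have h2 : ∑ r ∈ univ.filter (fun r : Fin N => (r : ℕ) < m), g r
      = ∑ j : Fin m, g (Fin.castLE hmN j) := by
    rw [hfilt, Finset.sum_image (fun a _ b _ hab => Fin.castLE_injective hmN hab)]
  rw [h1, h2]
  apply Finset.sum_le_sum
  intro j _
  apply hg
  exact hval j

-- Abel summation inequality
lemma aux_abel (n : ℕ) (c a b : ℕ → ℝ) (hc0 : ∀ t, 0 ≤ c t)
    (hcm : ∀ t, c (t + 1) ≤ c t)
    (h : ∀ m ≤ n, ∑ t ∈ range m, a t ≤ ∑ t ∈ range m, b t) :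
    ∑ t ∈ range n, c t * a t ≤ ∑ t ∈ range n, c t * b t := by
  have key : ∀ m ≤ n, ∑ t ∈ range m, (c t * a t - c t * b t)
      ≤ c m * (∑ t ∈ range m, a t - ∑ t ∈ range m, b t) := by
    intro m
    induction m with
    | zero => intro _; simp
    | succ p ih =>
      intro hpn
      have hp := ih (Nat.le_of_succ_le hpn)
      have hD : ∑ t ∈ range (p+1), a t - ∑ t ∈ range (p+1), b t ≤ 0 := by
        have := h (p+1) hpn; linarith
      rw [sum_range_succ, sum_range_succ, sum_range_succ] at *
      have hcc : c (p+1) ≤ c p := hcm p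
      nlinarith [hc0 p, hc0 (p+1)]
  have h1 := key n le_rfl
  have h2 := h n le_rfl
  have h3 : ∑ t ∈ range n, (c t * a t - c t * b t)
      = ∑ t ∈ range n, c t * a t - ∑ t ∈ range n, c t * b t :=
    Finset.sum_sub_distrib _ _
  nlinarith [hc0 n]

lemma aux_telescope {N : ℕ} (W : Fin N → ℝ) (σ : Equiv.Perm (Fin N)) (k : ℕ → ℕ) :
    ∀ m : ℕ, ∑ t ∈ range m, groupAbsSum W σ (prefSum k t) (prefSum k t + k t)
      = ∑ r ∈ univ.filter (fun r : Fin N => (r : ℕ) < prefSum k m), |W (σ r)| := by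
  intro m
  induction m with
  | zero => simp [prefSum]
  | succ p ih =>
    rw [sum_range_succ, ih]
    have hP : prefSum k (p+1) = prefSum k p + k p := Finset.sum_range_succ k p
    rw [hP]
    unfold groupAbsSum
    rw [← Finset.sum_union]
    · congr 1
      rw [← Finset.filter_or]
      apply Finset.filter_congr
      intro r _
      constructor
      · intro h; omega
      · intro h; omega
    · rw [Finset.disjoint_left]
      intro r hr hr'
      simp only [Finset.mem_filter, Finset.mem_univ, true_and] at hr hr'
      omega

/-- If `Q ∈ ℝ^N` has, for each `t = 0, …, n−1`, exactly `k t` entries equal to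
`±2^(−t)` and all remaining entries `0`, then
`|⟨Q, W⟩| ≤ ∑_{t=0}^{n−1} 2^(−t) ‖W_{[k_t]}‖₁`. -/
theorem inner_le_sorted_bound {N n : ℕ} (hn : 1 ≤ n) (W : Fin N → ℝ) (k : ℕ → ℕ)
    (hsum : ∑ t ∈ Finset.range n, k t ≤ N)
    (σ : Equiv.Perm (Fin N))
    (hσ : ∀ i j : Fin N, i ≤ j → |W (σ j)| ≤ |W (σ i)|)
    (Q : Fin N → ℝ)
    (hcount : ∀ t < n, (Finset.univ.filter
        (fun i : Fin N => Q i = (2 : ℝ) ^ (-(t : ℤ)) ∨ Q i = -(2 : ℝ) ^ (-(t : ℤ)))).card = k t)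
    (hrest : ∀ i : Fin N, Q i ≠ 0 →
        ∃ t < n, Q i = (2 : ℝ) ^ (-(t : ℤ)) ∨ Q i = -(2 : ℝ) ^ (-(t : ℤ))) :
    |∑ i, Q i * W i| ≤
      ∑ t ∈ Finset.range n, (2 : ℝ) ^ (-(t : ℤ)) *
        groupAbsSum W σ (prefSum k t) (prefSum k t + k t) := by
  classical
  set S : ℕ → Finset (Fin N) := fun t => Finset.univ.filter
      (fun i : Fin N => Q i = (2 : ℝ) ^ (-(t : ℤ)) ∨ Q i = -(2 : ℝ) ^ (-(t : ℤ))) with hS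
  -- disjointness of the S t for distinct t
  have hdisj : ∀ s t : ℕ, s ≠ t → Disjoint (S s) (S t) := by
    intro s t hst
    rw [Finset.disjoint_left]
    intro i hi hi'
    simp only [hS, Finset.mem_filter, Finset.mem_univ, true_and] at hi hi'
    have hpow : (2 : ℝ) ^ (-(s : ℤ)) ≠ (2 : ℝ) ^ (-(t : ℤ)) := by
      intro h
      rcases Nat.lt_or_ge s t with hlt | hge
      · have : (2:ℝ) ^ (-(t:ℤ)) < (2:ℝ) ^ (-(s:ℤ)) :=
          zpow_lt_zpow_right₀ (by norm_num) (by omega)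
        linarith
      · have hlt : t < s := by omega
        have : (2:ℝ) ^ (-(s:ℤ)) < (2:ℝ) ^ (-(t:ℤ)) :=
          zpow_lt_zpow_right₀ (by norm_num) (by omega)
        linarith
    have hs0 : (0:ℝ) < (2 : ℝ) ^ (-(s : ℤ)) := by positivity
    have ht0 : (0:ℝ) < (2 : ℝ) ^ (-(t : ℤ)) := by positivity
    rcases hi with h1 | h1 <;> rcases hi' with h2 | h2 <;> rw [h1] at h2 <;>
      first
      | exact hpow h2
      | exact hpow (neg_inj.1 h2)
      | linarith
  have habs : ∀ t : ℕ, ∀ i ∈ S t, |Q i| = (2 : ℝ) ^ (-(t : ℤ)) := by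
    intro t i hi
    simp only [hS, Finset.mem_filter, Finset.mem_univ, true_and] at hi
    have ht0 : (0:ℝ) < (2 : ℝ) ^ (-(t : ℤ)) := by positivity
    rcases hi with h | h <;> rw [h] <;> simp [abs_of_pos ht0]
  -- Step A: triangle inequality
  have stepA : |∑ i, Q i * W i| ≤ ∑ i, |Q i| * |W i| := by
    calc |∑ i, Q i * W i| ≤ ∑ i, |Q i * W i| := Finset.abs_sum_le_sum_abs _ _
    _ = ∑ i, |Q i| * |W i| := by simp [abs_mul]
  -- Step B: split over the S t
  have hUsub : ((range n).biUnion S) ⊆ Finset.univ := Finset.subset_univ _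
  have stepB : (∑ i, |Q i| * |W i|)
      = ∑ t ∈ range n, ∑ i ∈ S t, |Q i| * |W i| := by
    have h1 : (∑ i, |Q i| * |W i|) = ∑ i ∈ (range n).biUnion S, |Q i| * |W i| := by
      symm
      apply Finset.sum_subset hUsub
      intro i _ hi
      by_cases hQ : Q i = 0
      · rw [hQ]; simp
      · exfalso
        obtain ⟨t, htn, ht⟩ := hrest i hQ
        apply hi
        rw [Finset.mem_biUnion]
        refine ⟨t, Finset.mem_range.2 htn, ?_⟩
        simp only [hS, Finset.mem_filter, Finset.mem_univ, true_and]
        exact ht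
    rw [h1]
    apply Finset.sum_biUnion
    intro s hs t ht hst
    exact hdisj s t hst
  -- Step C: factor out the magnitudes
  have stepC : (∑ t ∈ range n, ∑ i ∈ S t, |Q i| * |W i|)
      = ∑ t ∈ range n, (2 : ℝ) ^ (-(t : ℤ)) * ∑ i ∈ S t, |W i| := by
    apply Finset.sum_congr rfl
    intro t _
    rw [Finset.mul_sum]
    apply Finset.sum_congr rfl
    intro i hi
    rw [habs t i hi]
  -- the partial-sum comparison
  have hpartial : ∀ m ≤ n, (∑ t ∈ range m, ∑ i ∈ S t, |W i|)
      ≤ ∑ t ∈ range m, groupAbsSum W σ (prefSum k t) (prefSum k t + k t) := by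
    intro m hm
    set Um := (range m).biUnion S with hUm
    have hdm : ∀ s ∈ range m, ∀ t ∈ range m, s ≠ t → Disjoint (S s) (S t) :=
      fun s _ t _ hst => hdisj s t hst
    have h1 : (∑ t ∈ range m, ∑ i ∈ S t, |W i|) = ∑ i ∈ Um, |W i| :=
      (Finset.sum_biUnion hdm).symm
    have hcard : Um.card = prefSum k m := by
      rw [hUm, Finset.card_biUnion hdm, prefSum]
      apply Finset.sum_congr rfl
      intro t ht
      exact hcount t (lt_of_lt_of_le (Finset.mem_range.1 ht) hm)
    set Bset := Um.image σ.symm with hBset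
    have hcard' : Bset.card = prefSum k m := by
      rw [hBset, Finset.card_image_of_injective _ σ.symm.injective, hcard]
    have h2 : (∑ i ∈ Um, |W i|) = ∑ r ∈ Bset, |W (σ r)| := by
      rw [hBset, Finset.sum_image (fun a _ b _ hab => σ.symm.injective hab)]
      apply Finset.sum_congr rfl
      intro i _
      rw [Equiv.apply_symm_apply]
    rw [h1, h2, aux_telescope W σ k m]
    exact aux_sorted (fun r => |W (σ r)|) hσ Bset hcard'
  -- assemble
  calc |∑ i, Q i * W i| ≤ ∑ i, |Q i| * |W i| := stepA
  _ = ∑ t ∈ range n, (2 : ℝ) ^ (-(t : ℤ)) * ∑ i ∈ S t, |W i| := by rw [stepB, stepC]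
  _ ≤ ∑ t ∈ range n, (2 : ℝ) ^ (-(t : ℤ)) *
        groupAbsSum W σ (prefSum k t) (prefSum k t + k t) := by
    apply aux_abel n (fun t => (2 : ℝ) ^ (-(t : ℤ)))
        (fun t => ∑ i ∈ S t, |W i|)
        (fun t => groupAbsSum W σ (prefSum k t) (prefSum k t + k t))
    · intro t; positivity
    · intro t
      apply zpow_le_zpow_right₀ (by norm_num : (1:ℝ) ≤ 2)
      push_cast
      omega
    · exact hpartial
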